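/- Let f : Δ → ℂ and τ : Δ → ℍ be holomorphic on a connected open set Δ ⊆ ℂ, and write f(t) = a(t)τ(t) + b(t) with a, b : Δ → ℝ continuous. Suppose that for every t ∈ Δ and every pair of rationals (q₁, q₂) with denominators in a fixed infinite multiplicatively closed set I ⊆ ℕ, we have (a(t), b(t)) ≠ (q₁, q₂). Then a and b are both constant. -/

import Mathlib

open Metric Set

theorem stmt_19 (Δ : Set ℂ) (hopen : IsOpen Δ) (hconn : IsPreconnected Δ)
    (f τ : ℂ → ℂ) (hf : DifferentiableOn ℂ f Δ) (hτ : DifferentiableOn ℂ τ Δ)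
    (hup : ∀ t ∈ Δ, 0 < (τ t).im)
    (a b : ℂ → ℝ) (ha : ContinuousOn a Δ) (hb : ContinuousOn b Δ)
    (hfab : ∀ t ∈ Δ, f t = (a t : ℂ) * τ t + (b t : ℂ))
    (I : Set ℕ) (hI : I.Infinite)
    (hImul : ∀ m ∈ I, ∀ n ∈ I, m * n ∈ I)
    (havoid : ∀ t ∈ Δ, ∀ n ∈ I, ∀ p q : ℤ,
      ¬ (a t = (p : ℝ) / (n : ℝ) ∧ b t = (q : ℝ) / (n : ℝ))) :
    ∀ s ∈ Δ, ∀ t ∈ Δ, a s = a t ∧ b s = b t := by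
  -- uniqueness of the real decomposition
  have key : ∀ z ∈ Δ, ∀ c d : ℝ, f z = (c : ℂ) * τ z + (d : ℂ) → a z = c ∧ b z = d := by
    intro z hz c d h
    have h2 : (a z : ℂ) * τ z + (b z : ℂ) = (c : ℂ) * τ z + (d : ℂ) := (hfab z hz).symm.trans h
    have him : a z * (τ z).im = c * (τ z).im := by
      have := congrArg Complex.im h2
      simpa using this
    have hac : a z = c := mul_right_cancel₀ (ne_of_gt (hup z hz)) him
    refine ⟨hac, ?_⟩
    have hbd : (b z : ℂ) = (d : ℂ) := by
      rw [hac] at h2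
      exact add_left_cancel h2
    exact_mod_cast hbd
  -- main claim
  have main : ∀ s ∈ Δ, ∀ z ∈ Δ, f z = (a s : ℂ) * τ z + (b s : ℂ) := by
    intro s hs
    set g : ℂ → ℂ := fun z => f z - (a s : ℂ) * τ z - (b s : ℂ) with hg_def
    have hg : DifferentiableOn ℂ g Δ :=
      (hf.sub (hτ.const_mul _)).sub (differentiableOn_const _)
    have hgan : AnalyticOnNhd ℂ g Δ := hg.analyticOnNhd hopen
    have hgs : g s = 0 := by
      simp only [hg_def]
      rw [hfab s hs]
      ring
    rcases (hgan s hs).eventually_eq_zero_or_eventually_ne_zero with hcase | hcase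
    · -- g ≡ 0 on Δ
      have hzero : EqOn g 0 Δ :=
        hgan.eqOn_zero_of_preconnected_of_eventuallyEq_zero hconn hs hcase
      intro z hz
      have := hzero hz
      simp only [hg_def, Pi.zero_apply] at this
      linear_combination this
    · -- g has an isolated zero at s; derive a contradiction
      exfalso
      obtain ⟨r₀, hr₀, hball₀⟩ := Metric.isOpen_iff.1 hopen s hs
      rw [eventually_nhdsWithin_iff, Metric.eventually_nhds_iff] at hcase
      obtain ⟨ε₁, hε₁, hne₁⟩ := hcase
      set r := min (r₀ / 2) (ε₁ / 2) with hr_def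
      have hr : 0 < r := lt_min (by linarith) (by linarith)
      have hcbΔ : closedBall s r ⊆ Δ := by
        refine subset_trans ?_ hball₀
        intro z hz
        have : dist z s ≤ r := mem_closedBall.1 hz
        exact mem_ball.2 (lt_of_le_of_lt this (lt_of_le_of_lt (min_le_left _ _) (by linarith)))
      have hsphere_ne : ∀ z ∈ sphere s r, g z ≠ 0 := by
        intro z hz
        have hd : dist z s = r := mem_sphere.1 hz
        have hzs : z ≠ s := by
          intro h; rw [h] at hd; simp at hd; exact hr.ne' hd.symm
        exact hne₁ (by rw [hd]; exact lt_of_le_of_lt (min_le_right _ _) (by linarith)) hzs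
      -- min of ‖g‖ on the sphere
      have hsph_ne : (sphere s r).Nonempty := NormedSpace.sphere_nonempty.2 hr.le
      have hgc : ContinuousOn (fun z => ‖g z‖) (sphere s r) :=
        ((hg.continuousOn).mono (subset_trans sphere_subset_closedBall hcbΔ)).norm
      obtain ⟨z₀, hz₀, hmin⟩ := (isCompact_sphere s r).exists_isMinOn hsph_ne hgc
      set ε := ‖g z₀‖ with hε_def
      have hεpos : 0 < ε := norm_pos_iff.2 (hsphere_ne z₀ hz₀)
      -- max of ‖τ‖ on the closed ball
      obtain ⟨w₀, hw₀, hmax⟩ := (isCompact_closedBall s r).exists_isMaxOn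
        ⟨s, mem_closedBall_self hr.le⟩ ((hτ.continuousOn.mono hcbΔ).norm)
      set M := ‖τ w₀‖ with hM_def
      have hM0 : 0 ≤ M := norm_nonneg _
      -- choose n ∈ I large
      obtain ⟨n, hnI, hn⟩ := hI.exists_gt (Nat.ceil (2 * (M + 1) / ε))
      have hn0 : 0 < (n : ℝ) := by
        have : (0:ℕ) ≤ Nat.ceil (2 * (M + 1) / ε) := Nat.zero_le _
        exact_mod_cast Nat.lt_of_le_of_lt this hn
      have hnbig : 2 * (M + 1) / ε < (n : ℝ) := by
        calc 2 * (M + 1) / ε ≤ (Nat.ceil (2 * (M + 1) / ε) : ℝ) := Nat.le_ceil _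
        _ < (n : ℝ) := by exact_mod_cast hn
      have hMεn : 2 * (M + 1) < ε * n := by
        have := (div_lt_iff₀ hεpos).1 hnbig
        linarith [mul_comm ε (n:ℝ)]
      set p : ℤ := round ((n : ℝ) * a s) with hp_def
      set q : ℤ := round ((n : ℝ) * b s) with hq_def
      set c : ℝ := (p : ℝ) / (n : ℝ) with hc_def
      set d : ℝ := (q : ℝ) / (n : ℝ) with hd_def
      have hα : |c - a s| ≤ 1 / (2 * n) := by
        have h1 : |(n : ℝ) * a s - (p : ℝ)| ≤ 1 / 2 := abs_sub_round _
        have : c - a s = -(((n : ℝ) * a s - (p : ℝ)) / n) := by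
          field_simp [hc_def]
          rw [hc_def, sub_mul, div_mul_cancel₀ _ hn0.ne']; ring
        rw [this, abs_neg, abs_div, abs_of_pos hn0]
        rw [div_le_div_iff₀ hn0 (by positivity)]
        calc |(n:ℝ) * a s - p| * (2 * n) ≤ (1/2) * (2 * n) := by
              apply mul_le_mul_of_nonneg_right h1 (by positivity)
        _ = 1 * n := by ring
      have hβ : |d - b s| ≤ 1 / (2 * n) := by
        have h1 : |(n : ℝ) * b s - (q : ℝ)| ≤ 1 / 2 := abs_sub_round _
        have : d - b s = -(((n : ℝ) * b s - (q : ℝ)) / n) := by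
          field_simp [hd_def]
          rw [hd_def, sub_mul, div_mul_cancel₀ _ hn0.ne']; ring
        rw [this, abs_neg, abs_div, abs_of_pos hn0]
        rw [div_le_div_iff₀ hn0 (by positivity)]
        calc |(n:ℝ) * b s - q| * (2 * n) ≤ (1/2) * (2 * n) := by
              apply mul_le_mul_of_nonneg_right h1 (by positivity)
        _ = 1 * n := by ring
      -- the perturbed function
      set h : ℂ → ℂ := fun z => f z - (c : ℂ) * τ z - (d : ℂ) with hh_def
      have hhne : ∀ z ∈ Δ, h z ≠ 0 := by
        intro z hz h0
        have hfz : f z = (c : ℂ) * τ z + (d : ℂ) := by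
          have := h0; simp only [hh_def] at this; linear_combination this
        obtain ⟨hac, hbd⟩ := key z hz c d hfz
        exact havoid z hz n hnI p q ⟨hac, hbd⟩
      have hpert : ∀ z, h z = g z - (((c - a s : ℝ) : ℂ) * τ z + ((d - b s : ℝ) : ℂ)) := by
        intro z
        simp only [hh_def, hg_def]
        push_cast
        ring
      have hpert_bound : ∀ z ∈ closedBall s r,
          ‖((c - a s : ℝ) : ℂ) * τ z + ((d - b s : ℝ) : ℂ)‖ < ε / 2 := by
        intro z hz
        have hτz : ‖τ z‖ ≤ M := hmax hz
        calc ‖((c - a s : ℝ) : ℂ) * τ z + ((d - b s : ℝ) : ℂ)‖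
            ≤ ‖((c - a s : ℝ) : ℂ) * τ z‖ + ‖((d - b s : ℝ) : ℂ)‖ := norm_add_le _ _
        _ = |c - a s| * ‖τ z‖ + |d - b s| := by
            rw [norm_mul, Complex.norm_real, Complex.norm_real, Real.norm_eq_abs,
              Real.norm_eq_abs]
        _ ≤ (1 / (2 * n)) * M + 1 / (2 * n) := by
            gcongr
        _ < ε / 2 := by
            have h2n : (0:ℝ) < 2 * n := by positivity
            rw [div_mul_eq_mul_div, ← add_div, div_lt_iff₀ h2n]
            nlinarith [hM0, hMεn, hεpos]
      -- h is small at s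
      have hhs : ‖h s‖ < ε / 2 := by
        rw [hpert s, hgs, zero_sub, norm_neg]
        exact hpert_bound s (mem_closedBall_self hr.le)
      -- h is big on the sphere
      have hhsph : ∀ z ∈ sphere s r, ε / 2 ≤ ‖h z‖ := by
        intro z hz
        have h1 : ε ≤ ‖g z‖ := hmin hz
        have h2 := hpert_bound z (sphere_subset_closedBall hz)
        have h3 := norm_sub_norm_le (g z) (((c - a s : ℝ) : ℂ) * τ z + ((d - b s : ℝ) : ℂ))
        rw [← hpert z] at h3
        linarith
      -- maximum modulus principle for 1/h
      have hinv : DifferentiableOn ℂ (fun z => (h z)⁻¹) Δ := by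
        apply DifferentiableOn.inv
        · exact (hf.sub (hτ.const_mul _)).sub (differentiableOn_const _)
        · exact hhne
      have hdc : DiffContOnCl ℂ (fun z => (h z)⁻¹) (ball s r) := by
        apply DifferentiableOn.diffContOnCl
        rw [closure_ball s hr.ne']
        exact hinv.mono hcbΔ
      have hmax_mod : ‖(h s)⁻¹‖ ≤ (ε / 2)⁻¹ := by
        apply Complex.norm_le_of_forall_mem_frontier_norm_le isBounded_ball hdc
        · intro z hz
          rw [frontier_ball s hr.ne'] at hz
          rw [norm_inv]
          exact inv_anti₀ (by linarith) (hhsph z hz)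
        · exact subset_closure (mem_ball_self hr)
      have hhs_ne : h s ≠ 0 := hhne s hs
      have hhs_pos : 0 < ‖h s‖ := norm_pos_iff.2 hhs_ne
      rw [norm_inv] at hmax_mod
      have hε2 : 0 < ε / 2 := by linarith
      have : ε / 2 ≤ ‖h s‖ := (inv_le_inv₀ hhs_pos hε2).1 hmax_mod
      linarith
  -- conclude
  intro s hs t ht
  obtain ⟨hat, hbt⟩ := key t ht (a s) (b s) (main s hs t ht)
  exact ⟨hat.symm, hbt.symm⟩
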